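/- arXiv:2602.02169 — 3 statements merged into one kernel-verified Lean document; each statement's English description precedes it below -/
import Mathlib

section
/- Let 0 < α < 1, p ∈ [0,1], and let s be a complex number with positive real part, ξ ∈ ℝ. Then p(s - iξ)^α + (1-p)(s + iξ)^α ≠ 0, where z^α = exp(α Log z) with the principal logarithm. -/
open Complex

lemma cpow_re_pos {α : ℝ} (hα0 : 0 < α) (hα1 : α < 1) {z : ℂ} (hz : 0 < z.re) :
    0 < (z ^ (α : ℂ)).re := by
  have hz0 : z ≠ 0 := by
    intro h; rw [h] at hz; simp at hz
  rw [Complex.cpow_def_of_ne_zero hz0, Complex.exp_re]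
  have hre : (Complex.log z * (α : ℂ)).re = α * Real.log ‖z‖ := by
    simp [Complex.mul_re, Complex.log_re, mul_comm]
  have him : (Complex.log z * (α : ℂ)).im = α * Complex.arg z := by
    simp [Complex.mul_im, Complex.log_im, mul_comm]
  rw [hre, him]
  have harg : |Complex.arg z| < Real.pi / 2 :=
    Complex.abs_arg_lt_pi_div_two_iff.mpr (Or.inl hz)
  have hcos : 0 < Real.cos (α * Complex.arg z) := by
    apply Real.cos_pos_of_mem_Ioo
    constructor
    · rcases abs_lt.mp harg with ⟨h1, h2⟩
      nlinarith
    · rcases abs_lt.mp harg with ⟨h1, h2⟩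
      nlinarith
  positivity

theorem symbol_nonvanishing (α : ℝ) (hα0 : 0 < α) (hα1 : α < 1)
    (p : ℝ) (hp0 : 0 ≤ p) (hp1 : p ≤ 1) (s : ℂ) (hs : 0 < s.re) (ξ : ℝ) :
    (p : ℂ) * (s - ξ * Complex.I) ^ (α : ℂ) +
      (1 - (p : ℂ)) * (s + ξ * Complex.I) ^ (α : ℂ) ≠ 0 := by
  have h1 : 0 < (s - ξ * Complex.I).re := by simpa using hs
  have h2 : 0 < (s + ξ * Complex.I).re := by simpa using hs
  have A := cpow_re_pos hα0 hα1 h1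
  have B := cpow_re_pos hα0 hα1 h2
  intro h
  have hre : ((p : ℂ) * (s - ξ * Complex.I) ^ (α : ℂ) +
      (1 - (p : ℂ)) * (s + ξ * Complex.I) ^ (α : ℂ)).re = 0 := by rw [h]; simp
  simp [Complex.add_re, Complex.mul_re, Complex.sub_re, Complex.sub_im] at hre
  nlinarith [A, B, mul_nonneg hp0 A.le, mul_nonneg (sub_nonneg.mpr hp1) B.le]
end

section
/- Let 0 < α < 1, T > 0, C ≥ 0, and let (aₙ) be a nonnegative sequence of reals with a₀ = 0 satisfying aₙ ≤ ∑_{j=0}^{n-1} (b_{n-j} - b_{n-j+1}) a_j + C b_{n+1}^{-1} · c for all n ≥ 1, where b_k = k^{1-α} - (k-1)^{1-α} and c ≥ 0. Then max_{0 ≤ j ≤ n} a_j ≤ (C/b_{n+1}) c for all n. -/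
namespace FracStability

theorem discrete_gronwall (α : ℝ) (hα0 : 0 < α) (hα1 : α < 1)
    (b : ℕ → ℝ) (hb : ∀ k, b k = (k : ℝ) ^ (1 - α) - ((k : ℝ) - 1) ^ (1 - α))
    (a : ℕ → ℝ) (ha : ∀ n, 0 ≤ a n) (ha0 : a 0 = 0) (K : ℝ) (hK : 0 ≤ K)
    (M : ℕ → ℝ) (hM : ∀ n, M n = (Finset.range (n + 1)).sup' (by simp) a)
    (hrec : ∀ n, 1 ≤ n → a n ≤ (1 - b (n + 1)) * M n + K) :
    ∀ n, M n ≤ K / b (n + 1) := by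
  set p : ℝ := 1 - α with hp
  have hp0 : 0 < p := by simp only [hp]; linarith
  have hp1 : p < 1 := by simp only [hp]; linarith
  have hbpos : ∀ k : ℕ, 1 ≤ k → 0 < b k := by
    intro k hk
    have hk1 : (1 : ℝ) ≤ (k : ℝ) := by exact_mod_cast hk
    rw [hb k, sub_pos]
    exact Real.rpow_lt_rpow (by linarith) (by linarith) hp0
  -- adjacent antitonicity via concavity
  have hadj : ∀ k : ℕ, 1 ≤ k → b (k + 1) ≤ b k := by
    intro k hk
    have hk1 : (1 : ℝ) ≤ (k : ℝ) := by exact_mod_cast hk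
    have hcc := (Real.strictConcaveOn_rpow hp0 hp1).concaveOn
    have h := hcc.2 (Set.mem_Ici.mpr (by linarith : (0:ℝ) ≤ (k:ℝ) - 1))
      (Set.mem_Ici.mpr (by linarith : (0:ℝ) ≤ (k:ℝ) + 1))
      (by norm_num : (0:ℝ) ≤ 1/2) (by norm_num : (0:ℝ) ≤ 1/2)
      (by norm_num : (1:ℝ)/2 + 1/2 = 1)
    simp only [smul_eq_mul] at h
    have hmid : (1:ℝ)/2 * ((k : ℝ) - 1) + (1:ℝ)/2 * ((k : ℝ) + 1) = (k : ℝ) := by ring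
    rw [hmid] at h
    have hcast : ((k + 1 : ℕ) : ℝ) = (k : ℝ) + 1 := by push_cast; ring
    rw [hb (k + 1), hb k, hcast]
    have : ((k : ℝ) + 1) - 1 = (k : ℝ) := by ring
    rw [this]
    linarith
  have hmono : ∀ m n : ℕ, 1 ≤ m → m ≤ n → b n ≤ b m := by
    intro m n hm hmn
    induction n with
    | zero => omega
    | succ n ih =>
      rcases Nat.lt_or_ge m (n + 1) with h | h
      · have hn1 : 1 ≤ n := by omega
        exact le_trans (hadj n hn1) (ih (by omega))
      · have : m = n + 1 := by omega
        subst this; exact le_refl _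
  have hb1 : b 1 = 1 := by
    rw [hb 1]
    simp [Real.zero_rpow (by positivity : p ≠ 0)]
  have hble1 : ∀ k : ℕ, 1 ≤ k → b k ≤ 1 := by
    intro k hk
    calc b k ≤ b 1 := hmono 1 k le_rfl hk
    _ = 1 := hb1
  intro n
  have hbn1 : 0 < b (n + 1) := hbpos (n + 1) (by omega)
  obtain ⟨j, hjmem, hj⟩ := Finset.exists_mem_eq_sup' (by simp : (Finset.range (n+1)).Nonempty) a
  rw [Finset.mem_range] at hjmem
  have hMn : M n = a j := by rw [hM n, hj]
  rcases Nat.eq_zero_or_pos j with rfl | hj1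
  · rw [hMn, ha0]
    positivity
  · have hbj1 : 0 < b (j + 1) := hbpos (j + 1) (by omega)
    have hbj1le : b (j + 1) ≤ 1 := hble1 (j + 1) (by omega)
    have hMjMn : M j ≤ M n := by
      rw [hM j, hM n]
      exact Finset.sup'_mono a (Finset.range_subset_range.mpr (by omega)) (by simp)
    have h1 := hrec j hj1
    have h2 : a j ≤ (1 - b (j + 1)) * M n + K := by
      have := mul_le_mul_of_nonneg_left hMjMn (by linarith : (0:ℝ) ≤ 1 - b (j + 1))
      linarith
    rw [hMn]
    have h3 : b (j + 1) * a j ≤ K := by nlinarith [hMn]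
    have h4 : a j ≤ K / b (j + 1) := (le_div_iff₀ hbj1).mpr (by linarith [mul_comm (b (j+1)) (a j)])
    calc a j ≤ K / b (j + 1) := h4
    _ ≤ K / b (n + 1) := by
        apply div_le_div_of_nonneg_left hK hbn1 ?_ |>.trans_eq rfl
        exact hmono (j + 1) (n + 1) (by omega) (by omega)

end FracStability
end

section
/- Let 0 < α < 1 and let (uⁿ) be a sequence of nonnegative summable functions on ℤ (scaled by h > 0) satisfying ‖uⁿ‖₁ = ∑_{j=1}^{n-1}(b_{n-j}-b_{n-j+1})‖u^j‖₁ + (b_n - b_{n+1}) + (1-α)(n+1)^{-α} + h^α Γ(2-α) ρ, with ‖u⁰‖₁ = 1, b_k = k^{1-α}-(k-1)^{1-α}, and ρ ≥ 0. Then ‖uⁿ‖₁ ≤ 1 + n h^α Γ(2-α) ρ for all n ≥ 1. -/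
section Aux

variable {α : ℝ}

/-- `b (k+1) ≤ b k` for `k ≥ 1`, by concavity of `x ^ (1-α)`. -/
lemma b_antitone_aux (hα0 : 0 < α) (hα1 : α < 1) {x : ℝ} (hx : 1 ≤ x) :
    (x + 1) ^ (1 - α) - x ^ (1 - α) ≤ x ^ (1 - α) - (x - 1) ^ (1 - α) := by
  have hconc : ConcaveOn ℝ (Set.Ici 0) fun t : ℝ ↦ t ^ (1 - α) :=
    Real.concaveOn_rpow (by linarith) (by linarith)
  have h1 : (x - 1 : ℝ) ∈ Set.Ici (0 : ℝ) := by simp; linarith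
  have h2 : (x + 1 : ℝ) ∈ Set.Ici (0 : ℝ) := by simp; linarith
  have := hconc.slope_anti_adjacent h1 h2 (by linarith : x - 1 < x) (by linarith : x < x + 1)
  simp only [add_sub_cancel_left, sub_sub_cancel, div_one] at this
  linarith

/-- Bernoulli-type bound: `(1-α)/(x+1)^α ≤ (x+1)^(1-α) - x^(1-α)` for `x ≥ 0`. -/
lemma b_lower_aux (hα0 : 0 < α) (hα1 : α < 1) {x : ℝ} (hx : 0 ≤ x) :
    (1 - α) / (x + 1) ^ α ≤ (x + 1) ^ (1 - α) - x ^ (1 - α) := by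
  have hx1 : (0 : ℝ) < x + 1 := by linarith
  set s : ℝ := -(1 / (x + 1)) with hs
  have hsne : s ≠ 0 := by
    simp [hs]
    positivity
  have hsm1 : -1 ≤ s := by
    rw [hs, neg_le_neg_iff]
    rw [div_le_one hx1]; linarith
  have hbern : (1 + s) ^ (1 - α) < 1 + (1 - α) * s :=
    rpow_one_add_lt_one_add_mul_self hsm1 hsne (by linarith) (by linarith)
  have h1s : (1 : ℝ) + s = x / (x + 1) := by
    field_simp [hs]
    rw [hs, add_mul, neg_mul, one_div, inv_mul_cancel₀ hx1.ne']; ring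
  have hxeq : x ^ (1 - α) = (x + 1) ^ (1 - α) * (1 + s) ^ (1 - α) := by
    rw [h1s, ← Real.mul_rpow hx1.le (by positivity)]
    rw [mul_div_cancel₀ _ hx1.ne']
  have hpow : (x + 1) ^ (1 - α) * (x + 1)⁻¹ = (x + 1) ^ (-α) := by
    rw [← Real.rpow_neg_one (x + 1), ← Real.rpow_add hx1]
    congr 1
    ring
  have hppos : (0 : ℝ) < (x + 1) ^ (1 - α) := Real.rpow_pos_of_pos hx1 _
  have hkey : x ^ (1 - α) ≤ (x + 1) ^ (1 - α) * (1 + (1 - α) * s) := by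
    rw [hxeq]
    exact mul_le_mul_of_nonneg_left hbern.le hppos.le
  have hexp : (x + 1) ^ (1 - α) * (1 + (1 - α) * s)
      = (x + 1) ^ (1 - α) - (1 - α) * ((x + 1) ^ (1 - α) * (x + 1)⁻¹) := by
    rw [hs]
    field_simp
    ring
  rw [hexp, hpow] at hkey
  have hneg : (x + 1) ^ (-α) = 1 / (x + 1) ^ α := by
    rw [Real.rpow_neg hx1.le, one_div]
  rw [hneg] at hkey
  have h2 : (1 - α) * (1 / (x + 1) ^ α) ≤ (x + 1) ^ (1 - α) - x ^ (1 - α) := by linarith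
  calc (1 - α) / (x + 1) ^ α = (1 - α) * (1 / (x + 1) ^ α) := by ring
    _ ≤ _ := h2

end Aux

theorem discrete_probability_conservation (α h ρ : ℝ) (hα0 : 0 < α) (hα1 : α < 1)
    (hh : 0 < h) (hρ : 0 ≤ ρ)
    (b : ℕ → ℝ) (hb : ∀ k, b k = (k : ℝ) ^ (1 - α) - ((k : ℝ) - 1) ^ (1 - α))
    (N : ℕ → ℝ) (hN : ∀ n, 0 ≤ N n) (hN0 : N 0 = 1)
    (hrec : ∀ n, 1 ≤ n →
      N n = (∑ j ∈ Finset.Ico 1 n, (b (n - j) - b (n - j + 1)) * N j) +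
        (b n - b (n + 1)) + (1 - α) / ((n : ℝ) + 1) ^ α +
        h ^ α * Real.Gamma (2 - α) * ρ) :
    ∀ n, 1 ≤ n → N n ≤ 1 + (n : ℝ) * h ^ α * Real.Gamma (2 - α) * ρ := by
  set C : ℝ := h ^ α * Real.Gamma (2 - α) * ρ with hCdef
  have hC : 0 ≤ C := by
    apply mul_nonneg (mul_nonneg _ _) hρ
    · positivity
    · exact (Real.Gamma_pos_of_pos (by linarith)).le
  -- basic facts about b
  have hb1 : b 1 = 1 := by
    rw [hb 1]
    norm_num [Real.zero_rpow (show (1 : ℝ) - α ≠ 0 by intro hc; linarith)]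
  have hbstep : ∀ k : ℕ, 1 ≤ k → b (k + 1) ≤ b k := by
    intro k hk
    rw [hb k, hb (k + 1)]
    have hk1 : (1 : ℝ) ≤ (k : ℝ) := by exact_mod_cast hk
    have h2 := b_antitone_aux hα0 hα1 hk1
    push_cast
    have h3 : ((k : ℝ) + 1 - 1) = (k : ℝ) := by ring
    rw [h3]
    linarith
  have hble : ∀ k : ℕ, 1 ≤ k → b k ≤ 1 := by
    intro k hk
    induction k with
    | zero => omega
    | succ m ih =>
      rcases Nat.eq_or_lt_of_le hk with h1 | h1
      · rw [← h1]; exact hb1.le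
      · have hm : 1 ≤ m := by omega
        exact le_trans (hbstep m hm) (ih hm)
  have hbnonneg : ∀ k : ℕ, 1 ≤ k → 0 ≤ b k := by
    intro k hk
    rw [hb k]
    have hk1 : (1 : ℝ) ≤ (k : ℝ) := by exact_mod_cast hk
    have : ((k : ℝ) - 1) ^ (1 - α) ≤ (k : ℝ) ^ (1 - α) :=
      Real.rpow_le_rpow (by linarith) (by linarith) (by linarith)
    linarith
  have hblow : ∀ n : ℕ, (1 - α) / ((n : ℝ) + 1) ^ α ≤ b (n + 1) := by
    intro n
    rw [hb (n + 1)]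
    have h2 := b_lower_aux hα0 hα1 (x := (n : ℝ)) (Nat.cast_nonneg n)
    push_cast
    have h3 : ((n : ℝ) + 1 - 1) = (n : ℝ) := by ring
    rw [h3]
    linarith
  -- telescoping sum
  have htel : ∀ n : ℕ, 1 ≤ n →
      (∑ j ∈ Finset.Ico 1 n, (b (n - j) - b (n - j + 1))) = 1 - b n := by
    intro n hn
    have hre : (∑ j ∈ Finset.Ico 1 n, (b (n - j) - b (n - j + 1)))
        = ∑ k ∈ Finset.Ico 1 n, (b k - b (k + 1)) := by
      refine Finset.sum_nbij' (fun j => n - j) (fun k => n - k) ?_ ?_ ?_ ?_ ?_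
      · intro a ha; simp only [Finset.mem_Ico] at *; omega
      · intro a ha; simp only [Finset.mem_Ico] at *; omega
      · intro a ha; simp only [Finset.mem_Ico] at *; omega
      · intro a ha; simp only [Finset.mem_Ico] at *; omega
      · intro a ha; rfl
    rw [hre]
    have : (∑ k ∈ Finset.Ico 1 n, (b k - b (k + 1)))
        = ∑ i ∈ Finset.range (n - 1), (b (i + 1) - b (i + 1 + 1)) := by
      rw [Finset.sum_Ico_eq_sum_range]
      congr 1
      ext i
      congr 2 <;> omega
    rw [this, Finset.sum_range_sub' (fun i => b (i + 1)), hb1]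
    congr 2
    omega
  -- strong induction
  intro n
  induction n using Nat.strong_induction_on with
  | _ n ih =>
    intro hn
    rw [hrec n hn]
    have hwnn : ∀ j ∈ Finset.Ico 1 n, 0 ≤ b (n - j) - b (n - j + 1) := by
      intro j hj
      simp only [Finset.mem_Ico] at hj
      have h1 : 1 ≤ n - j := by omega
      linarith [hbstep (n - j) h1]
    -- bound the sum
    have hsum : (∑ j ∈ Finset.Ico 1 n, (b (n - j) - b (n - j + 1)) * N j)
        ≤ (1 - b n) * (1 + ((n : ℝ) - 1) * C) := by
      have hstep : (∑ j ∈ Finset.Ico 1 n, (b (n - j) - b (n - j + 1)) * N j)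
          ≤ ∑ j ∈ Finset.Ico 1 n, (b (n - j) - b (n - j + 1)) * (1 + ((n : ℝ) - 1) * C) := by
        apply Finset.sum_le_sum
        intro j hj
        apply mul_le_mul_of_nonneg_left _ (hwnn j hj)
        simp only [Finset.mem_Ico] at hj
        have hjn : (j : ℝ) ≤ (n : ℝ) - 1 := by
          have : (j : ℝ) + 1 ≤ (n : ℝ) := by exact_mod_cast hj.2
          linarith
        calc N j ≤ 1 + (j : ℝ) * C := by
              have := ih j hj.2 hj.1
              rw [hCdef] at *
              linarith [this]
          _ ≤ 1 + ((n : ℝ) - 1) * C := by nlinarith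
      rw [← Finset.sum_mul, htel n hn] at hstep
      exact hstep
    have hbn0 : 0 ≤ b n := hbnonneg n hn
    have hbn1 : b n ≤ 1 := hble n hn
    have hbl : (1 - α) / ((n : ℝ) + 1) ^ α ≤ b (n + 1) := hblow n
    have hn1 : (1 : ℝ) ≤ (n : ℝ) := by exact_mod_cast hn
    have key : (1 - b n) * (1 + ((n : ℝ) - 1) * C) ≤ (1 - b n) + ((n : ℝ) - 1) * C := by
      nlinarith [mul_nonneg (mul_nonneg hbn0 (by linarith : (0 : ℝ) ≤ (n : ℝ) - 1)) hC]
    have hrhs : (n : ℝ) * h ^ α * Real.Gamma (2 - α) * ρ = (n : ℝ) * C := by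
      rw [hCdef]; ring
    rw [hrhs]
    linarith [hsum, key, hbl]
end
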